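/- Let X be an integrable real random variable and N ~ N(0,1). Then the 1-Wasserstein distance satisfies d_W(X, N) ≤ sup_f |E[f(X)·X − f'(X)]|, where the supremum runs over all C¹ functions f : ℝ → ℝ with ‖f'‖_∞ ≤ 2 whose derivative f' is Lipschitz with constant at most 2. -/

import Mathlib

open MeasureTheory ProbabilityTheory


open MeasureTheory ProbabilityTheory Real Set Filter Topology
open scoped ENNReal NNReal

noncomputable def stG (x : ℝ) : ℝ := (Real.sqrt (2 * Real.pi))⁻¹ * Real.exp (-x ^ 2 / 2)

lemma stG_pos (x : ℝ) : 0 < stG x := by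
  unfold stG; positivity

lemma continuous_stG : Continuous stG := by
  unfold stG
  fun_prop

lemma stG_hasDerivAt (x : ℝ) : HasDerivAt stG (-x * stG x) x := by
  unfold stG
  have h1 : HasDerivAt (fun x : ℝ => -x ^ 2 / 2) (-x) x := by
    have := ((hasDerivAt_pow 2 x).neg).div_const 2
    refine this.congr_deriv ?_; ring
  have h2 := (h1.exp).const_mul (Real.sqrt (2 * Real.pi))⁻¹
  refine h2.congr_deriv ?_
  ring

lemma integrable_stG : Integrable stG := by
  have : Integrable (fun x : ℝ => Real.exp (-(2⁻¹) * x ^ 2)) := integrable_exp_neg_mul_sq (by norm_num)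
  have h2 := this.const_mul (Real.sqrt (2 * Real.pi))⁻¹
  refine h2.congr (Eventually.of_forall fun x => ?_)
  unfold stG; ring_nf

lemma integrable_mul_stG : Integrable (fun x => x * stG x) := by
  have : Integrable (fun x : ℝ => x * Real.exp (-(2⁻¹) * x ^ 2)) := integrable_mul_exp_neg_mul_sq (by norm_num)
  have h2 := this.const_mul (Real.sqrt (2 * Real.pi))⁻¹
  refine h2.congr (Eventually.of_forall fun x => ?_)
  unfold stG; ring_nf

lemma integrable_abs_mul_stG : Integrable (fun x => |x| * stG x) := by
  have := integrable_mul_stG.abs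
  refine this.congr (Eventually.of_forall fun x => ?_)
  simp only [abs_mul, abs_of_nonneg (stG_pos x).le]

lemma stG_eq_pdf : stG = gaussianPDFReal 0 1 := by
  ext x
  simp [stG, gaussianPDFReal]

lemma integral_stG : ∫ x, stG x = 1 := by
  rw [stG_eq_pdf]
  exact integral_gaussianPDFReal_eq_one 0 one_ne_zero

lemma tendsto_stG_atTop : Tendsto stG atTop (𝓝 0) := by
  have h1 : Tendsto (fun x : ℝ => -x ^ 2 / 2) atTop atBot := by
    apply Tendsto.atBot_div_const (by norm_num)
    exact tendsto_neg_atTop_atBot.comp (tendsto_pow_atTop two_ne_zero)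
  have h2 := (Real.tendsto_exp_atBot.comp h1).const_mul (Real.sqrt (2 * Real.pi))⁻¹
  rw [mul_zero] at h2
  exact h2

set_option maxHeartbeats 1000000 in
lemma tendsto_stG_atBot : Tendsto stG atBot (𝓝 0) := by
  have h1 : Tendsto (fun x : ℝ => -x ^ 2 / 2) atBot atBot := by
    apply Tendsto.atBot_div_const (by norm_num)
    have h0 : Tendsto (fun x : ℝ => x ^ 2) atBot atTop := by
      have := (tendsto_pow_atTop (α := ℝ) two_ne_zero).comp (tendsto_neg_atBot_atTop (G := ℝ))
      refine this.congr fun x => ?_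
      simp [Function.comp, neg_pow]
    exact tendsto_neg_atTop_atBot.comp h0
  have h2 := (Real.tendsto_exp_atBot.comp h1).const_mul (Real.sqrt (2 * Real.pi))⁻¹
  rw [mul_zero] at h2
  exact h2


lemma hasDerivAt_integral_Iic {ψ : ℝ → ℝ} (hc : Continuous ψ) (hi : Integrable ψ) (x : ℝ) :
    HasDerivAt (fun u => ∫ t in Iic u, ψ t) (ψ x) x := by
  have heq : ∀ u : ℝ, ∫ t in Iic u, ψ t = (∫ t in Iic (0:ℝ), ψ t) + ∫ t in (0:ℝ)..u, ψ t := by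
    intro u
    rw [← intervalIntegral.integral_Iic_sub_Iic hi.integrableOn hi.integrableOn]
    ring
  have hd : HasDerivAt (fun u => (∫ t in Iic (0:ℝ), ψ t) + ∫ t in (0:ℝ)..u, ψ t) (ψ x) x := by
    refine HasDerivAt.const_add _ ?_
    exact intervalIntegral.integral_hasDerivAt_right hi.intervalIntegrable
      (hc.stronglyMeasurableAtFilter _ _) hc.continuousAt
  simpa only [← heq] using hd

noncomputable def stPhi (x : ℝ) : ℝ := ∫ t in Iic x, stG t
noncomputable def stPsi (x : ℝ) : ℝ := ∫ t in Ioi x, stG t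

lemma stPhi_hasDerivAt (x : ℝ) : HasDerivAt stPhi (stG x) x :=
  hasDerivAt_integral_Iic continuous_stG integrable_stG x

lemma stPhi_nonneg (x : ℝ) : 0 ≤ stPhi x :=
  setIntegral_nonneg measurableSet_Iic fun t _ => (stG_pos t).le

lemma stPsi_nonneg (x : ℝ) : 0 ≤ stPsi x :=
  setIntegral_nonneg measurableSet_Ioi fun t _ => (stG_pos t).le

lemma stPhi_add_stPsi (x : ℝ) : stPhi x + stPsi x = 1 := by
  rw [stPhi, stPsi, intervalIntegral.integral_Iic_add_Ioi integrable_stG.integrableOn integrable_stG.integrableOn,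
    integral_stG]

lemma moment_Ioi (x : ℝ) : ∫ t in Ioi x, t * stG t = stG x := by
  have hderiv : ∀ t ∈ Ici x, HasDerivAt (fun y => -stG y) (t * stG t) t := by
    intro t _
    have := (stG_hasDerivAt t).neg
    refine this.congr_deriv ?_; ring
  have := integral_Ioi_of_hasDerivAt_of_tendsto' hderiv
    integrable_mul_stG.integrableOn (by simpa using tendsto_stG_atTop.neg)
  simpa using this

lemma moment_Iic (x : ℝ) : ∫ t in Iic x, t * stG t = -stG x := by
  have hderiv : ∀ t ∈ Iic x, HasDerivAt (fun y => -stG y) (t * stG t) t := by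
    intro t _
    have := (stG_hasDerivAt t).neg
    refine this.congr_deriv ?_; ring
  have := integral_Iic_of_hasDerivAt_of_tendsto' hderiv
    integrable_mul_stG.integrableOn (by simpa using tendsto_stG_atBot.neg)
  simpa using this

lemma millsU_Psi (x : ℝ) : x * stPsi x ≤ stG x := by
  have h1 : x * stPsi x = ∫ t in Ioi x, x * stG t := by
    rw [stPsi, ← integral_const_mul]
  rw [h1, ← moment_Ioi x]
  refine setIntegral_mono_on (integrable_stG.integrableOn.const_mul x)
    integrable_mul_stG.integrableOn measurableSet_Ioi ?_
  intro t ht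
  exact mul_le_mul_of_nonneg_right (le_of_lt ht) (stG_pos t).le

lemma millsU_Phi (x : ℝ) : -stG x ≤ x * stPhi x := by
  have h1 : x * stPhi x = ∫ t in Iic x, x * stG t := by
    rw [stPhi, ← integral_const_mul]
  rw [h1, ← moment_Iic x]
  refine setIntegral_mono_on integrable_mul_stG.integrableOn
    (integrable_stG.integrableOn.const_mul x) measurableSet_Iic ?_
  intro t ht
  exact mul_le_mul_of_nonneg_right ht (stG_pos t).le

noncomputable def stV (t : ℝ) : ℝ := t * stG t / (1 + t ^ 2)

lemma stV_hasDerivAt (t : ℝ) :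
    HasDerivAt stV ((1 - 2 * t ^ 2 - t ^ 4) / (1 + t ^ 2) ^ 2 * stG t) t := by
  have hnum : HasDerivAt (fun y => y * stG y) (stG t + t * (-t * stG t)) t := by
    have := (hasDerivAt_id t).mul (stG_hasDerivAt t)
    exact this.congr_deriv (by simp)
  have hden : HasDerivAt (fun y : ℝ => 1 + y ^ 2) (2 * t) t := by
    have := (hasDerivAt_pow 2 t).const_add 1
    simpa using this
  have hne : (1 + t ^ 2) ≠ 0 := by positivity
  have := hnum.div hden hne
  refine this.congr_deriv ?_
  field_simp
  ring

lemma stV_abs_le (t : ℝ) : |stV t| ≤ stG t := by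
  rw [stV, abs_div, abs_mul, abs_of_nonneg (stG_pos t).le, abs_of_pos (by positivity : (0:ℝ) < 1 + t ^ 2)]
  rw [div_le_iff₀ (by positivity)]
  have h1 : |t| ≤ 1 + t ^ 2 := by nlinarith [abs_nonneg t, sq_abs t]
  nlinarith [stG_pos t, abs_nonneg t]

lemma stV'_abs_le (t : ℝ) : |(1 - 2 * t ^ 2 - t ^ 4) / (1 + t ^ 2) ^ 2 * stG t| ≤ stG t := by
  rw [abs_mul, abs_of_nonneg (stG_pos t).le]
  have h2 : |(1 - 2 * t ^ 2 - t ^ 4) / (1 + t ^ 2) ^ 2| ≤ 1 := by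
    rw [abs_div, abs_of_pos (by positivity : (0:ℝ) < (1 + t ^ 2) ^ 2), div_le_one (by positivity)]
    rw [abs_le]; constructor <;> nlinarith [sq_nonneg t, sq_nonneg (t^2)]
  nlinarith [stG_pos t, abs_nonneg ((1 - 2 * t ^ 2 - t ^ 4) / (1 + t ^ 2) ^ 2)]

lemma integrable_stV' : Integrable (fun t => (1 - 2 * t ^ 2 - t ^ 4) / (1 + t ^ 2) ^ 2 * stG t) := by
  refine Integrable.mono integrable_stG ?_ (Eventually.of_forall fun t => ?_)
  · exact (Continuous.div (by fun_prop) (by fun_prop) (fun t => by positivity)).mul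
      continuous_stG |>.aestronglyMeasurable
  · rw [Real.norm_eq_abs, Real.norm_eq_abs, abs_of_nonneg (stG_pos t).le]
    exact stV'_abs_le t

lemma tendsto_stV_atTop : Tendsto stV atTop (𝓝 0) :=
  squeeze_zero_norm stV_abs_le tendsto_stG_atTop

lemma tendsto_stV_atBot : Tendsto stV atBot (𝓝 0) :=
  squeeze_zero_norm stV_abs_le tendsto_stG_atBot

lemma millsL_Psi (x : ℝ) : x * stG x / (1 + x ^ 2) ≤ stPsi x := by
  have hint : ∫ t in Ioi x, ((1 - 2 * t ^ 2 - t ^ 4) / (1 + t ^ 2) ^ 2 * stG t) = -stV x := by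
    have := integral_Ioi_of_hasDerivAt_of_tendsto' (a := x)
      (fun t _ => stV_hasDerivAt t) integrable_stV'.integrableOn tendsto_stV_atTop
    simpa using this
  have hsum : stPsi x + (- stV x) = ∫ t in Ioi x,
      (stG t + (1 - 2 * t ^ 2 - t ^ 4) / (1 + t ^ 2) ^ 2 * stG t) := by
    rw [integral_add integrable_stG.integrableOn integrable_stV'.integrableOn, hint, stPsi]
  have hnn : 0 ≤ stPsi x + (- stV x) := by
    rw [hsum]
    refine setIntegral_nonneg measurableSet_Ioi fun t _ => ?_
    have : stG t + (1 - 2 * t ^ 2 - t ^ 4) / (1 + t ^ 2) ^ 2 * stG t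
        = 2 / (1 + t ^ 2) ^ 2 * stG t := by
      field_simp; ring
    rw [this]
    exact mul_nonneg (by positivity) (stG_pos t).le
  have : stV x ≤ stPsi x := by linarith
  simpa [stV] using this

lemma millsL_Phi (x : ℝ) : -(x * stG x / (1 + x ^ 2)) ≤ stPhi x := by
  have hint : ∫ t in Iic x, ((1 - 2 * t ^ 2 - t ^ 4) / (1 + t ^ 2) ^ 2 * stG t) = stV x := by
    have := integral_Iic_of_hasDerivAt_of_tendsto' (a := x)
      (fun t _ => stV_hasDerivAt t) integrable_stV'.integrableOn tendsto_stV_atBot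
    simpa using this
  have hsum : stPhi x + stV x = ∫ t in Iic x,
      (stG t + (1 - 2 * t ^ 2 - t ^ 4) / (1 + t ^ 2) ^ 2 * stG t) := by
    rw [integral_add integrable_stG.integrableOn integrable_stV'.integrableOn, hint, stPhi]
  have hnn : 0 ≤ stPhi x + stV x := by
    rw [hsum]
    refine setIntegral_nonneg measurableSet_Iic fun t _ => ?_
    have : stG t + (1 - 2 * t ^ 2 - t ^ 4) / (1 + t ^ 2) ^ 2 * stG t
        = 2 / (1 + t ^ 2) ^ 2 * stG t := by
      field_simp; ring
    rw [this]
    exact mul_nonneg (by positivity) (stG_pos t).le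
  have : -stV x ≤ stPhi x := by linarith
  rw [stV] at this
  linarith

lemma abs_moment : ∫ t, |t| * stG t = 2 * stG 0 := by
  rw [← intervalIntegral.integral_Iic_add_Ioi (b := (0:ℝ)) integrable_abs_mul_stG.integrableOn
    integrable_abs_mul_stG.integrableOn]
  have h1 : ∫ t in Iic (0:ℝ), |t| * stG t = stG 0 := by
    rw [setIntegral_congr_fun measurableSet_Iic
      (fun t (ht : t ≤ 0) => by rw [abs_of_nonpos ht] : ∀ t ∈ Iic (0:ℝ), |t| * stG t = -t * stG t)]
    have : ∫ t in Iic (0:ℝ), -t * stG t = -∫ t in Iic (0:ℝ), t * stG t := by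
      rw [← integral_neg]; congr 1; ext t; ring
    rw [this, moment_Iic]; simp
  have h2 : ∫ t in Ioi (0:ℝ), |t| * stG t = stG 0 := by
    rw [setIntegral_congr_fun measurableSet_Ioi
      (fun t (ht : 0 < t) => by rw [abs_of_pos ht] : ∀ t ∈ Ioi (0:ℝ), |t| * stG t = t * stG t)]
    exact moment_Ioi 0
  rw [h1, h2]; ring


lemma stPhi_def (x : ℝ) : stPhi x = ∫ t in Iic x, stG t := rfl
lemma stPsi_def (x : ℝ) : stPsi x = ∫ t in Ioi x, stG t := rfl

lemma stG0_le : stG 0 ≤ 3/4 := by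
  have h : stG 0 = (Real.sqrt (2 * Real.pi))⁻¹ := by simp [stG]
  rw [h]
  have h1 : (4:ℝ)/3 ≤ Real.sqrt (2 * Real.pi) := by
    rw [show (4:ℝ)/3 = Real.sqrt ((4/3)^2) by rw [Real.sqrt_sq (by norm_num)]]
    apply Real.sqrt_le_sqrt
    nlinarith [Real.pi_gt_three]
  calc (Real.sqrt (2 * Real.pi))⁻¹ ≤ ((4:ℝ)/3)⁻¹ := by
        apply inv_anti₀ (by norm_num) h1
    _ ≤ 3/4 := by norm_num

lemma stG_eq_pdf' : stG = gaussianPDFReal 0 1 := stG_eq_pdf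

section SteinCore
variable {g : ℝ → ℝ}

lemma lip_abs_sub (hg : LipschitzWith 1 g) (a b : ℝ) : |g a - g b| ≤ |a - b| := by
  have := hg.dist_le_mul a b
  simpa [Real.dist_eq] using this

lemma integrable_linear_stG (x : ℝ) : Integrable (fun t => (|x| + |t|) * stG t) := by
  have h : (fun t => (|x| + |t|) * stG t) = fun t => |x| * stG t + |t| * stG t := by
    ext t; ring
  rw [h]
  exact (integrable_stG.const_mul (|x|)).add integrable_abs_mul_stG

lemma integrable_g_mul_stG (hg : LipschitzWith 1 g) : Integrable (fun t => g t * stG t) := by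
  refine Integrable.mono (integrable_linear_stG (g 0))
    ((hg.continuous.mul continuous_stG).aestronglyMeasurable) (Eventually.of_forall fun t => ?_)
  rw [Real.norm_eq_abs, Real.norm_eq_abs, abs_mul, abs_of_nonneg (stG_pos t).le]
  have h1 : |g t| ≤ |g 0| + |t| := by
    have h0 := lip_abs_sub hg t 0
    have h2 : |g t| - |g 0| ≤ |g t - g 0| := abs_sub_abs_le_abs_sub _ _
    simp only [sub_zero] at h0
    linarith
  rw [abs_of_nonneg (mul_nonneg (by positivity) (stG_pos t).le : (0:ℝ) ≤ (|g 0| + |t|) * stG t)]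
  exact mul_le_mul_of_nonneg_right h1 (stG_pos t).le

lemma g_growth (hg : LipschitzWith 1 g) (hgz : ∫ t, g t * stG t = 0) (x : ℝ) :
    |g x| ≤ 2 * stG 0 + |x| := by
  have h1 : g x = ∫ t, (g x - g t) * stG t := by
    have h2 : ∫ t, (g x - g t) * stG t = (∫ t, g x * stG t) - ∫ t, g t * stG t := by
      rw [← integral_sub (integrable_stG.const_mul (g x)) (integrable_g_mul_stG hg)]
      congr 1; ext t; ring
    rw [h2, hgz, integral_const_mul, integral_stG, mul_one, sub_zero]
  have hfint : Integrable (fun t => (g x - g t) * stG t) := by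
    refine ((integrable_stG.const_mul (g x)).sub (integrable_g_mul_stG hg)).congr
      (Eventually.of_forall fun t => ?_)
    simp only [Pi.sub_apply]
    ring
  have h3 : |g x| ≤ ∫ t, (|x| + |t|) * stG t := by
    rw [h1]
    calc |∫ t, (g x - g t) * stG t| ≤ ∫ t, |(g x - g t) * stG t| := by
          simpa [Real.norm_eq_abs, abs_mul] using
            norm_integral_le_integral_norm (μ := (volume : Measure ℝ)) (fun t => (g x - g t) * stG t)
      _ ≤ ∫ t, (|x| + |t|) * stG t := by
          refine integral_mono hfint.abs (integrable_linear_stG x) fun t => ?_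
          rw [abs_mul, abs_of_nonneg (stG_pos t).le]
          refine mul_le_mul_of_nonneg_right ?_ (stG_pos t).le
          calc |g x - g t| ≤ |x - t| := lip_abs_sub hg x t
            _ ≤ |x| + |t| := abs_sub _ _
  have h5 : ∫ t, (|x| + |t|) * stG t = |x| + 2 * stG 0 := by
    have h : (fun t => (|x| + |t|) * stG t) = fun t => |x| * stG t + |t| * stG t := by
      ext t; ring
    rw [h, integral_add (integrable_stG.const_mul (|x|)) integrable_abs_mul_stG,
      integral_const_mul, integral_stG, abs_moment, mul_one]
  rw [h5] at h3
  linarith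

lemma r1_bound (hg : LipschitzWith 1 g) (x : ℝ) :
    |(∫ t in Iic x, g t * stG t) - g x * stPhi x| ≤ x * stPhi x + stG x := by
  have hgi := integrable_g_mul_stG hg
  have e1 : (∫ t in Iic x, g t * stG t) - g x * stPhi x = ∫ t in Iic x, (g t - g x) * stG t := by
    rw [stPhi_def, ← integral_const_mul,
      ← integral_sub hgi.integrableOn (integrable_stG.integrableOn.const_mul _)]
    congr 1; ext t; ring
  have hfint : IntegrableOn (fun t => (g t - g x) * stG t) (Iic x) := by
    refine (hgi.integrableOn.sub (integrable_stG.integrableOn.const_mul (g x))).congr (Eventually.of_forall fun t => ?_)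
    simp only [Pi.sub_apply]; ring
  have hxint : IntegrableOn (fun t => (x - t) * stG t) (Iic x) := by
    refine ((integrable_stG.integrableOn.const_mul x).sub integrable_mul_stG.integrableOn).congr (Eventually.of_forall fun t => ?_)
    simp only [Pi.sub_apply]; ring
  have e2 : ∫ t in Iic x, (x - t) * stG t = x * stPhi x + stG x := by
    have : ∫ t in Iic x, (x - t) * stG t
        = (∫ t in Iic x, x * stG t) - ∫ t in Iic x, t * stG t := by
      rw [← integral_sub (integrable_stG.integrableOn.const_mul x) integrable_mul_stG.integrableOn]
      congr 1; ext t; ring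
    rw [this, integral_const_mul, moment_Iic, ← stPhi_def]; ring
  rw [e1, ← e2]
  calc |∫ t in Iic x, (g t - g x) * stG t| ≤ ∫ t in Iic x, |g t - g x| * |stG t| := by
        simpa [Real.norm_eq_abs, abs_mul] using
          norm_integral_le_integral_norm (μ := (volume.restrict (Iic x))) (fun t => (g t - g x) * stG t)
    _ ≤ ∫ t in Iic x, (x - t) * stG t := by
        refine setIntegral_mono_on ?_ hxint measurableSet_Iic fun t ht => ?_
        · simpa [abs_mul, IntegrableOn] using hfint.abs
        · rw [abs_of_nonneg (stG_pos t).le]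
          refine mul_le_mul_of_nonneg_right ?_ (stG_pos t).le
          calc |g t - g x| ≤ |t - x| := lip_abs_sub hg t x
            _ = x - t := by rw [abs_sub_comm, abs_of_nonneg (by simp at ht; linarith)]

lemma r2_bound (hg : LipschitzWith 1 g) (x : ℝ) :
    |(∫ t in Ioi x, g t * stG t) - g x * stPsi x| ≤ stG x - x * stPsi x := by
  have hgi := integrable_g_mul_stG hg
  have e1 : (∫ t in Ioi x, g t * stG t) - g x * stPsi x = ∫ t in Ioi x, (g t - g x) * stG t := by
    rw [stPsi_def, ← integral_const_mul,
      ← integral_sub hgi.integrableOn (integrable_stG.integrableOn.const_mul _)]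
    congr 1; ext t; ring
  have hfint : IntegrableOn (fun t => (g t - g x) * stG t) (Ioi x) := by
    refine (hgi.integrableOn.sub (integrable_stG.integrableOn.const_mul (g x))).congr (Eventually.of_forall fun t => ?_)
    simp only [Pi.sub_apply]; ring
  have hxint : IntegrableOn (fun t => (t - x) * stG t) (Ioi x) := by
    refine (integrable_mul_stG.integrableOn.sub (integrable_stG.integrableOn.const_mul x)).congr (Eventually.of_forall fun t => ?_)
    simp only [Pi.sub_apply]; ring
  have e2 : ∫ t in Ioi x, (t - x) * stG t = stG x - x * stPsi x := by
    have : ∫ t in Ioi x, (t - x) * stG t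
        = (∫ t in Ioi x, t * stG t) - ∫ t in Ioi x, x * stG t := by
      rw [← integral_sub integrable_mul_stG.integrableOn (integrable_stG.integrableOn.const_mul x)]
      congr 1; ext t; ring
    rw [this, integral_const_mul, moment_Ioi, ← stPsi_def]
  rw [e1, ← e2]
  calc |∫ t in Ioi x, (g t - g x) * stG t| ≤ ∫ t in Ioi x, |g t - g x| * |stG t| := by
        simpa [Real.norm_eq_abs, abs_mul] using
          norm_integral_le_integral_norm (μ := (volume.restrict (Ioi x))) (fun t => (g t - g x) * stG t)
    _ ≤ ∫ t in Ioi x, (t - x) * stG t := by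
        refine setIntegral_mono_on ?_ hxint measurableSet_Ioi fun t ht => ?_
        · simpa [abs_mul, IntegrableOn] using hfint.abs
        · rw [abs_of_nonneg (stG_pos t).le]
          refine mul_le_mul_of_nonneg_right ?_ (stG_pos t).le
          calc |g t - g x| ≤ |t - x| := lip_abs_sub hg t x
            _ = t - x := by rw [abs_of_nonneg (by simp at ht; linarith)]

lemma tail_eq (hg : LipschitzWith 1 g) (hgz : ∫ t, g t * stG t = 0) (x : ℝ) :
    ∫ t in Ioi x, g t * stG t = -∫ t in Iic x, g t * stG t := by
  have hgi := integrable_g_mul_stG hg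
  have := intervalIntegral.integral_Iic_add_Ioi (b := x) hgi.integrableOn hgi.integrableOn
  rw [hgz] at this; linarith

lemma keyB (hg : LipschitzWith 1 g) (hgz : ∫ t, g t * stG t = 0) (x : ℝ) :
    |(1 + x ^ 2) * (∫ t in Iic x, g t * stG t) + x * g x * stG x| ≤ stG x := by
  set m := ∫ t in Iic x, g t * stG t with hm
  have hφ : 0 < stG x := stG_pos x
  have hΦΨ : stPhi x + stPsi x = 1 := stPhi_add_stPsi x
  have hx2 : (0:ℝ) < 1 + x ^ 2 := by positivity
  set lam := stPsi x - x * stG x / (1 + x ^ 2) with hlam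
  have hlam0 : 0 ≤ lam := by have := millsL_Psi x; rw [hlam]; linarith
  have hlam1 : lam ≤ 1 := by have := millsL_Phi x; rw [hlam]; linarith
  have h1lam : 0 ≤ 1 - lam := by linarith
  set r1 := m - g x * stPhi x with hr1d
  have hb1 := r1_bound hg x
  rw [← hm, ← hr1d] at hb1
  set r2 := -m - g x * stPsi x with hr2d
  have hb2 := r2_bound hg x
  rw [tail_eq hg hgz x, ← hm, ← hr2d] at hb2
  have hΦe : stPhi x = 1 - stPsi x := by linarith
  have hid : (1 + x ^ 2) * m + x * g x * stG x = (1 + x ^ 2) * (lam * r1 - (1 - lam) * r2) := by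
    rw [hr1d, hr2d, hlam, hΦe]; field_simp; ring
  have hfin : (1 + x ^ 2) * (lam * (x * stPhi x + stG x) + (1 - lam) * (stG x - x * stPsi x))
      = stG x := by
    rw [hlam, hΦe]; field_simp; ring
  have a1 := (abs_le.mp hb1).1
  have a2 := (abs_le.mp hb1).2
  have b1 := (abs_le.mp hb2).1
  have b2 := (abs_le.mp hb2).2
  rw [hid, abs_le]
  constructor
  · have hsum : -(lam * (x * stPhi x + stG x) + (1 - lam) * (stG x - x * stPsi x))
        ≤ lam * r1 - (1 - lam) * r2 := by
      have t1 := mul_le_mul_of_nonneg_left a1 hlam0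
      have t2 := mul_le_mul_of_nonneg_left b2 h1lam
      nlinarith
    have := mul_le_mul_of_nonneg_left hsum hx2.le
    nlinarith
  · have hsum : lam * r1 - (1 - lam) * r2
        ≤ lam * (x * stPhi x + stG x) + (1 - lam) * (stG x - x * stPsi x) := by
      have t1 := mul_le_mul_of_nonneg_left a2 hlam0
      have t2 := mul_le_mul_of_nonneg_left b1 h1lam
      nlinarith
    have := mul_le_mul_of_nonneg_left hsum hx2.le
    nlinarith

lemma keyA (hg : LipschitzWith 1 g) (hgz : ∫ t, g t * stG t = 0) (x : ℝ) :
    |g x * stG x + x * (∫ t in Iic x, g t * stG t)| ≤ 2 * stG x := by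
  set m := ∫ t in Iic x, g t * stG t with hm
  have hφ : 0 < stG x := stG_pos x
  have hx2 : (0:ℝ) < 1 + x ^ 2 := by positivity
  have hc : 2 * stG 0 ≤ 3 / 2 := by have := stG0_le; linarith
  have h0 : 0 < stG 0 := stG_pos 0
  have hgg := g_growth hg hgz x
  rcases le_or_gt 0 x with hx | hx
  · set r2 := -m - g x * stPsi x with hr2d
    have hb2 := r2_bound hg x
    rw [tail_eq hg hgz x, ← hm, ← hr2d] at hb2
    have hU := millsU_Psi x
    have hL := millsL_Psi x
    have hid : g x * stG x + x * m = g x * (stG x - x * stPsi x) - x * r2 := by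
      rw [hr2d]; ring
    have habs : |g x * (stG x - x * stPsi x) - x * r2|
        ≤ |g x| * (stG x - x * stPsi x) + x * |r2| := by
      calc |g x * (stG x - x * stPsi x) - x * r2|
          ≤ |g x * (stG x - x * stPsi x)| + |x * r2| := abs_sub _ _
        _ = |g x| * (stG x - x * stPsi x) + x * |r2| := by
            rw [abs_mul, abs_mul, abs_of_nonneg (by linarith : 0 ≤ stG x - x * stPsi x),
              abs_of_nonneg hx]
    rw [hid]
    refine le_trans habs ?_
    have hgx : |g x| ≤ 2 * stG 0 + x := by rwa [abs_of_nonneg hx] at hgg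
    have hr2' : |r2| ≤ stG x - x * stPsi x := hb2
    have hmills : (stG x - x * stPsi x) * (1 + x ^ 2) ≤ stG x := by
      have := mul_le_mul_of_nonneg_left hL hx
      have hxx : x * (x * stG x / (1 + x ^ 2)) = x ^ 2 * stG x / (1 + x ^ 2) := by ring
      rw [hxx] at this
      rw [sub_mul]
      have : x ^ 2 * stG x / (1 + x ^ 2) * (1 + x^2) = x ^ 2 * stG x := by field_simp
      nlinarith [mul_le_mul_of_nonneg_left hL hx, hφ.le]
    have e1 : |g x| * (stG x - x * stPsi x) + x * |r2|
        ≤ (2 * stG 0 + 2 * x) * (stG x - x * stPsi x) := by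
      nlinarith [abs_nonneg r2, abs_nonneg (g x)]
    refine le_trans e1 ?_
    nlinarith [sq_nonneg (x - 1/2), mul_le_mul_of_nonneg_left hmills
      (by linarith : (0:ℝ) ≤ 2 * stG 0 + 2 * x), hφ.le, stG_pos 0]
  · set r1 := m - g x * stPhi x with hr1d
    have hb1 := r1_bound hg x
    rw [← hm, ← hr1d] at hb1
    have hU := millsU_Phi x
    have hL := millsL_Phi x
    have hid : g x * stG x + x * m = g x * (stG x + x * stPhi x) + x * r1 := by
      rw [hr1d]; ring
    have habs : |g x * (stG x + x * stPhi x) + x * r1|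
        ≤ |g x| * (stG x + x * stPhi x) + (-x) * |r1| := by
      calc |g x * (stG x + x * stPhi x) + x * r1|
          ≤ |g x * (stG x + x * stPhi x)| + |x * r1| := abs_add_le _ _
        _ = |g x| * (stG x + x * stPhi x) + (-x) * |r1| := by
            rw [abs_mul, abs_mul, abs_of_nonneg (by linarith : 0 ≤ stG x + x * stPhi x),
              abs_of_neg hx]
    rw [hid]
    refine le_trans habs ?_
    have hgx : |g x| ≤ 2 * stG 0 + (-x) := by rwa [abs_of_neg hx] at hgg
    have hr1' : |r1| ≤ x * stPhi x + stG x := hb1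
    have hmills : (stG x + x * stPhi x) * (1 + x ^ 2) ≤ stG x := by
      have h1 : x * stPhi x ≤ x * -(x * stG x / (1 + x ^ 2)) := by
        exact mul_le_mul_of_nonpos_left hL hx.le
      have h2 : x * -(x * stG x / (1 + x ^ 2)) * (1 + x ^ 2) = -(x ^ 2 * stG x) := by
        field_simp
      nlinarith [mul_le_mul_of_nonneg_right h1 hx2.le, hφ.le]
    have e1 : |g x| * (stG x + x * stPhi x) + (-x) * |r1|
        ≤ (2 * stG 0 + 2 * (-x)) * (stG x + x * stPhi x) := by
      nlinarith [abs_nonneg r1, abs_nonneg (g x)]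
    refine le_trans e1 ?_
    nlinarith [sq_nonneg (x + 1/2), mul_le_mul_of_nonneg_left hmills
      (by linarith : (0:ℝ) ≤ 2 * stG 0 + 2 * (-x)), hφ.le, stG_pos 0]


noncomputable def stF (g : ℝ → ℝ) (x : ℝ) : ℝ := (∫ t in Iic x, g t * stG t) / stG x

lemma stF_hasDerivAt (hg : LipschitzWith 1 g) (x : ℝ) :
    HasDerivAt (stF g) (g x + x * stF g x) x := by
  have hnum : HasDerivAt (fun u => ∫ t in Iic u, g t * stG t) (g x * stG x) x :=
    hasDerivAt_integral_Iic (hg.continuous.mul continuous_stG) (integrable_g_mul_stG hg) x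
  have hden := stG_hasDerivAt x
  have h := hnum.div hden (stG_pos x).ne'
  have he : stF g = fun u => (∫ t in Iic u, g t * stG t) / stG u := rfl
  rw [he]
  refine h.congr_deriv ?_
  simp only [stF]
  have hφ := stG_pos x
  field_simp
  ring

lemma stK_hasDerivAt (hg : LipschitzWith 1 g) (x : ℝ) :
    HasDerivAt (fun y => y * stF g y) (stF g x + x * (g x + x * stF g x)) x := by
  have := (hasDerivAt_id x).mul (stF_hasDerivAt hg x)
  refine this.congr_deriv ?_
  simp

lemma stK_deriv_abs_le (hg : LipschitzWith 1 g) (hgz : ∫ t, g t * stG t = 0) (x : ℝ) :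
    |stF g x + x * (g x + x * stF g x)| ≤ 1 := by
  have hφ := stG_pos x
  have e : stF g x + x * (g x + x * stF g x)
      = ((1 + x ^ 2) * (∫ t in Iic x, g t * stG t) + x * g x * stG x) / stG x := by
    simp only [stF]; field_simp; ring
  rw [e, abs_div, abs_of_pos hφ, div_le_one hφ]
  exact keyB hg hgz x

lemma stK_lipschitz (hg : LipschitzWith 1 g) (hgz : ∫ t, g t * stG t = 0) :
    LipschitzWith 1 (fun y => y * stF g y) := by
  apply lipschitzWith_of_nnnorm_deriv_le
  · exact fun x => (stK_hasDerivAt hg x).differentiableAt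
  · intro x
    rw [(stK_hasDerivAt hg x).deriv, ← NNReal.coe_le_coe, coe_nnnorm, NNReal.coe_one,
      Real.norm_eq_abs]
    exact stK_deriv_abs_le hg hgz x

lemma stF'_lipschitz (hg : LipschitzWith 1 g) (hgz : ∫ t, g t * stG t = 0) :
    LipschitzWith 2 (fun x => g x + x * stF g x) := by
  have h2 : (2 : ℝ≥0) = 1 + 1 := by norm_num
  rw [h2]
  exact hg.add (stK_lipschitz hg hgz)

lemma stF'_abs_le (hg : LipschitzWith 1 g) (hgz : ∫ t, g t * stG t = 0) (x : ℝ) :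
    |g x + x * stF g x| ≤ 2 := by
  have hφ := stG_pos x
  have e : g x + x * stF g x
      = (g x * stG x + x * (∫ t in Iic x, g t * stG t)) / stG x := by
    simp only [stF]; field_simp
  rw [e, abs_div, abs_of_pos hφ, div_le_iff₀ hφ]
  have := keyA hg hgz x
  linarith

lemma integral_gaussianReal_eq (f : ℝ → ℝ) :
    ∫ y, f y ∂(gaussianReal 0 1) = ∫ y, f y * stG y := by
  rw [gaussianReal_of_var_ne_zero _ one_ne_zero]
  have hd : gaussianPDF 0 1 = fun x => ((gaussianPDFReal 0 1 x).toNNReal : ℝ≥0∞) := rfl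
  rw [hd, integral_withDensity_eq_integral_smul (measurable_gaussianPDFReal 0 1).real_toNNReal]
  congr 1
  ext y
  rw [NNReal.smul_def, smul_eq_mul, Real.coe_toNNReal _ (gaussianPDFReal_nonneg 0 1 y),
    mul_comm, stG_eq_pdf]

end SteinCore


/-- Stein bound for the 1-Wasserstein distance: for integrable `X` and `N ~ N(0,1)`,
`d_W(X,N) ≤ sup_f |E[f(X)X − f'(X)]|`, the supremum being over all `C¹`
functions `f` with `‖f'‖_∞ ≤ 2` and `f'` Lipschitz with constant `2`.
The inequality between suprema is expressed as: every upper bound `C` of the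
right-hand side set is an upper bound of `|E[h(X)] − E[h(N)]|` for every
`1`-Lipschitz `h`. -/
theorem wasserstein_stein_bound
    {Ω : Type*} [MeasurableSpace Ω] (P : Measure Ω) [IsProbabilityMeasure P]
    (X : Ω → ℝ) (hX : Measurable X) (hXint : Integrable X P)
    (C : ℝ)
    (hC : ∀ f f' : ℝ → ℝ, (∀ x, HasDerivAt f (f' x) x) →
      (∀ x, |f' x| ≤ 2) → LipschitzWith 2 f' →
      |∫ ω, (f (X ω) * X ω - f' (X ω)) ∂P| ≤ C) :
    ∀ h : ℝ → ℝ, LipschitzWith 1 h →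
      |∫ ω, h (X ω) ∂P - ∫ y, h y ∂(gaussianReal 0 1)| ≤ C := by
  intro h Lh
  set μh := ∫ y, h y ∂(gaussianReal 0 1) with hμh
  have hconv : μh = ∫ y, h y * stG y := integral_gaussianReal_eq h
  set g : ℝ → ℝ := fun y => h y - μh with hgdef
  have hg : LipschitzWith 1 g := by
    have : g = (fun y : ℝ => y - μh) ∘ h := rfl
    rw [this]
    have hiso : Isometry (fun y : ℝ => y - μh) := Isometry.of_dist_eq fun a b => by
      simp [Real.dist_eq]
    simpa using (hiso.lipschitz.comp Lh)
  have hhint : Integrable (fun t => h t * stG t) := integrable_g_mul_stG Lh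
  have hgz : ∫ t, g t * stG t = 0 := by
    have e : (fun t => g t * stG t) = fun t => h t * stG t - μh * stG t := by
      ext t; simp only [hgdef]; ring
    rw [e, integral_sub hhint (integrable_stG.const_mul μh), integral_const_mul, integral_stG,
      mul_one, ← hconv, sub_self]
  have hCapp := hC (stF g) (fun x => g x + x * stF g x)
    (fun x => stF_hasDerivAt hg x) (fun x => stF'_abs_le hg hgz x) (stF'_lipschitz hg hgz)
  have hpt : ∀ ω, stF g (X ω) * X ω - (g (X ω) + X ω * stF g (X ω)) = μh - h (X ω) := by
    intro ω
    simp only [hgdef]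
    ring
  have hIhX : Integrable (fun ω => h (X ω)) P := by
    refine Integrable.mono ((integrable_const (|h 0|)).add hXint.abs)
      ((Lh.continuous.measurable.comp hX).aestronglyMeasurable) (Eventually.of_forall fun ω => ?_)
    have h0 := Lh.dist_le_mul (X ω) 0
    simp only [Real.dist_eq, sub_zero, NNReal.coe_one, one_mul] at h0
    have h2 : |h (X ω)| - |h 0| ≤ |h (X ω) - h 0| := abs_sub_abs_le_abs_sub _ _
    simp only [Pi.add_apply, Real.norm_eq_abs]
    rw [abs_of_nonneg (by positivity : (0:ℝ) ≤ |h 0| + |X ω|)]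
    linarith
  have hrw : ∫ ω, (stF g (X ω) * X ω - (g (X ω) + X ω * stF g (X ω))) ∂P
      = μh - ∫ ω, h (X ω) ∂P := by
    have : ∫ ω, (stF g (X ω) * X ω - (g (X ω) + X ω * stF g (X ω))) ∂P
        = ∫ ω, (μh - h (X ω)) ∂P := by
      congr 1; ext ω; exact hpt ω
    rw [this, integral_sub (integrable_const μh) hIhX, integral_const, probReal_univ,
      one_smul]
  rw [hrw] at hCapp
  rw [abs_sub_comm]
  exact hCapp
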